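/- arXiv:2311.12575 — 4 statements merged into one kernel-verified Lean document; each statement's English description precedes it below -/
import Mathlib

section
/- Let a < b be reals, e ∈ [a,b], K a natural number, and ε ≥ 0. Let ε_0, ε_1, …, ε_K be reals with |ε_k| ≤ ε for all 0 ≤ k ≤ K, and let w_1, …, w_K be reals with |w_k| ≤ 1 for all 1 ≤ k ≤ K. Then |(ε_0/2)·(e−a) + ∑_{k=1}^K w_k · ε_k · ((b−a)/(kπ)) · sin(kπ(e−a)/(b−a))| ≤ √(K+1) · ε · √((e−a)²/4 + (b−a)²/6). -/
open Real

/-- Filtered variant of the coefficient-error propagation bound (paper's Lemma A.2,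
counterparty level): multiplying each term by a filter value `w k` with `|w k| ≤ 1`
preserves the `√(K+1) · ε` bound. -/
theorem coefficient_error_propagation_filtered
    (a b e : ℝ) (hab : a < b) (he : e ∈ Set.Icc a b) (K : ℕ) (ε : ℝ) (hε : 0 ≤ ε)
    (err : ℕ → ℝ) (herr : ∀ k : ℕ, k ≤ K → |err k| ≤ ε)
    (w : ℕ → ℝ) (hw : ∀ k : ℕ, 1 ≤ k → k ≤ K → |w k| ≤ 1) :
    |err 0 / 2 * (e - a) +
        ∑ k ∈ Finset.Icc 1 K,
          w k * err k * ((b - a) / ((k : ℝ) * π)) * Real.sin ((k : ℝ) * π * (e - a) / (b - a))|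
      ≤ Real.sqrt ((K : ℝ) + 1) * ε * Real.sqrt ((e - a) ^ 2 / 4 + (b - a) ^ 2 / 6) := by
  have hπ : (0:ℝ) < π := Real.pi_pos
  obtain ⟨hea, heb⟩ := he
  have hba : (0:ℝ) < b - a := sub_pos.2 hab
  have hea' : (0:ℝ) ≤ e - a := sub_nonneg.2 hea
  set c : ℕ → ℝ := fun k => if k = 0 then (e - a) / 2 else (b - a) / ((k : ℝ) * π) with hc
  have hcnn : ∀ k, 0 ≤ c k := by
    intro k
    rcases Nat.eq_zero_or_pos k with h | h
    · simp [hc, h]; linarith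
    · have : k ≠ 0 := h.ne'
      simp only [hc, this, if_false]
      apply div_nonneg hba.le
      positivity
  -- Step 1: triangle inequality
  have h1 : |err 0 / 2 * (e - a) +
      ∑ k ∈ Finset.Icc 1 K,
        w k * err k * ((b - a) / ((k : ℝ) * π)) * Real.sin ((k : ℝ) * π * (e - a) / (b - a))|
      ≤ ε * ∑ k ∈ Finset.range (K + 1), c k := by
    calc |err 0 / 2 * (e - a) +
        ∑ k ∈ Finset.Icc 1 K,
          w k * err k * ((b - a) / ((k : ℝ) * π)) * Real.sin ((k : ℝ) * π * (e - a) / (b - a))|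
        ≤ |err 0 / 2 * (e - a)| +
          ∑ k ∈ Finset.Icc 1 K,
            |w k * err k * ((b - a) / ((k : ℝ) * π)) * Real.sin ((k : ℝ) * π * (e - a) / (b - a))| := by
          exact (abs_add_le _ _).trans (by gcongr; exact Finset.abs_sum_le_sum_abs _ _)
      _ ≤ ε * c 0 + ∑ k ∈ Finset.Icc 1 K, ε * c k := by
          gcongr with k hk
          · have h0 := herr 0 (Nat.zero_le K)
            simp only [hc, if_pos rfl]
            rw [abs_mul, abs_div, abs_of_nonneg hea',
              abs_of_nonneg (by norm_num : (0:ℝ) ≤ 2)]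
            calc |err 0| / 2 * (e - a) ≤ ε / 2 * (e - a) := by gcongr
              _ = ε * ((e - a) / 2) := by ring
          · obtain ⟨hk1, hk2⟩ := Finset.mem_Icc.1 hk
            have hkne : k ≠ 0 := by omega
            have hkpos : (0:ℝ) < (k : ℝ) * π := by
              have : (1:ℝ) ≤ (k : ℝ) := by exact_mod_cast hk1
              positivity
            simp only [hc, hkne, if_false]
            rw [abs_mul, abs_mul, abs_mul]
            calc |w k| * |err k| * |(b - a) / ((k : ℝ) * π)| * |Real.sin _|
                ≤ 1 * ε * ((b - a) / ((k : ℝ) * π)) * 1 := by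
                  have habs : |(b - a) / ((k : ℝ) * π)| = (b - a) / ((k : ℝ) * π) :=
                    abs_of_nonneg (by positivity)
                  gcongr
                  · exact hw k hk1 hk2
                  · exact herr k hk2
                  · exact le_of_eq habs
                  · exact Real.abs_sin_le_one _
              _ = ε * ((b - a) / ((k : ℝ) * π)) := by ring
      _ = ε * ∑ k ∈ Finset.range (K + 1), c k := by
          rw [Finset.mul_sum]
          have hins : Finset.range (K + 1) = insert 0 (Finset.Icc 1 K) := by
            ext x; simp [Nat.lt_succ_iff]; omega
          rw [hins, Finset.sum_insert (by simp)]
  -- Step 2: Cauchy–Schwarz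
  have h2 : ∑ k ∈ Finset.range (K + 1), c k ≤
      Real.sqrt ((K : ℝ) + 1) * Real.sqrt (∑ k ∈ Finset.range (K + 1), (c k) ^ 2) := by
    have hcs := Finset.sum_mul_sq_le_sq_mul_sq (Finset.range (K + 1)) (fun _ => (1:ℝ)) c
    simp only [one_pow, one_mul, Finset.sum_const, Finset.card_range, nsmul_eq_mul, mul_one] at hcs
    have hsum_nn : 0 ≤ ∑ k ∈ Finset.range (K + 1), c k :=
      Finset.sum_nonneg fun k _ => hcnn k
    have := Real.sqrt_le_sqrt hcs
    rw [Real.sqrt_sq hsum_nn, Real.sqrt_mul (by positivity)] at this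
    simpa using this
  -- Step 3: bound on the sum of squares
  have h3 : ∑ k ∈ Finset.range (K + 1), (c k) ^ 2 ≤ (e - a) ^ 2 / 4 + (b - a) ^ 2 / 6 := by
    have hins : Finset.range (K + 1) = insert 0 (Finset.Icc 1 K) := by
      ext x; simp [Nat.lt_succ_iff]; omega
    rw [hins, Finset.sum_insert (by simp)]
    have hc0 : (c 0) ^ 2 = (e - a) ^ 2 / 4 := by simp [hc]; ring
    rw [hc0]
    gcongr
    have hre : ∀ k ∈ Finset.Icc 1 K, (c k) ^ 2 = (b - a) ^ 2 / π ^ 2 * (1 / (k : ℝ) ^ 2) := by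
      intro k hk
      obtain ⟨hk1, _⟩ := Finset.mem_Icc.1 hk
      have hkne : k ≠ 0 := by omega
      have hkR : ((k : ℝ)) ≠ 0 := Nat.cast_ne_zero.2 hkne
      simp only [hc, hkne, if_false]
      field_simp
    rw [Finset.sum_congr rfl hre, ← Finset.mul_sum]
    have hbasel : ∑ k ∈ Finset.Icc 1 K, (1 : ℝ) / (k : ℝ) ^ 2 ≤ π ^ 2 / 6 :=
      (Summable.sum_le_tsum (Finset.Icc 1 K) (fun i _ => by positivity)
        hasSum_zeta_two.summable).trans_eq hasSum_zeta_two.tsum_eq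
    calc (b - a) ^ 2 / π ^ 2 * ∑ k ∈ Finset.Icc 1 K, (1 : ℝ) / (k : ℝ) ^ 2
        ≤ (b - a) ^ 2 / π ^ 2 * (π ^ 2 / 6) := by gcongr
      _ = (b - a) ^ 2 / 6 := by field_simp
  -- Combine
  have h4 : Real.sqrt (∑ k ∈ Finset.range (K + 1), (c k) ^ 2) ≤
      Real.sqrt ((e - a) ^ 2 / 4 + (b - a) ^ 2 / 6) := Real.sqrt_le_sqrt h3
  calc |err 0 / 2 * (e - a) +
      ∑ k ∈ Finset.Icc 1 K,
        w k * err k * ((b - a) / ((k : ℝ) * π)) * Real.sin ((k : ℝ) * π * (e - a) / (b - a))|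
      ≤ ε * ∑ k ∈ Finset.range (K + 1), c k := h1
    _ ≤ ε * (Real.sqrt ((K : ℝ) + 1) * Real.sqrt (∑ k ∈ Finset.range (K + 1), (c k) ^ 2)) := by
        gcongr
    _ ≤ ε * (Real.sqrt ((K : ℝ) + 1) * Real.sqrt ((e - a) ^ 2 / 4 + (b - a) ^ 2 / 6)) := by
        gcongr
    _ = Real.sqrt ((K : ℝ) + 1) * ε * Real.sqrt ((e - a) ^ 2 / 4 + (b - a) ^ 2 / 6) := by ring
end

section
/- Let f : ℝ → ℝ be a nonnegative, bounded, Lebesgue-integrable function with ∫_ℝ f = 1 and with finite first and second moments, i.e. ∫_ℝ |v| f(v) dv < ∞ and ∫_ℝ v² f(v) dv < ∞. Fix a natural number K and a real e. For reals a < b with a ≤ e ≤ b, define ε₂(a,b) = ((e−a)/(b−a)) · ∫_{ℝ∖[a,b]} f(v) dv + ∑_{k=1}^K (2/(kπ)) · sin(kπ(e−a)/(b−a)) · ∫_{ℝ∖[a,b]} cos(kπ(v−a)/(b−a)) f(v) dv. Then ε₂(a,b) tends to 0 as a → −∞ and b → +∞ (i.e. along the filter atBot ×ˢ atTop on pairs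 (a,b)). -/
open Real MeasureTheory Filter

/-- Paper's Lemma A.1 (netting-set level): the truncation-range error `ε₂` in the
COS-recovered CDF converges to 0 as the truncation range `[a,b]` grows to cover ℝ. -/
theorem cos_range_truncation_error_tendsto_zero
    (f : ℝ → ℝ) (hf_nonneg : ∀ v, 0 ≤ f v) (hf_bdd : ∃ M : ℝ, ∀ v, f v ≤ M)
    (hf_int : Integrable f)
    (hf_one : ∫ v, f v = 1)
    (hf_m1 : Integrable (fun v => |v| * f v))
    (hf_m2 : Integrable (fun v => v ^ 2 * f v))
    (K : ℕ) (e : ℝ) :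
    Tendsto
      (fun p : ℝ × ℝ =>
        (e - p.1) / (p.2 - p.1) * (∫ v in (Set.Icc p.1 p.2)ᶜ, f v) +
          ∑ k ∈ Finset.Icc 1 K,
            2 / ((k : ℝ) * π) * Real.sin ((k : ℝ) * π * (e - p.1) / (p.2 - p.1)) *
              ∫ v in (Set.Icc p.1 p.2)ᶜ,
                Real.cos ((k : ℝ) * π * (v - p.1) / (p.2 - p.1)) * f v)
      (Filter.atBot ×ˢ Filter.atTop) (nhds 0) := by
  have hmeas : ∀ a b : ℝ, MeasurableSet ((Set.Icc a b)ᶜ) := fun a b =>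
    measurableSet_Icc.compl
  set g : ℝ × ℝ → ℝ := fun p => ∫ v in (Set.Icc p.1 p.2)ᶜ, f v with hg
  have hg0 : ∀ p : ℝ × ℝ, 0 ≤ g p := fun p =>
    setIntegral_nonneg (hmeas _ _) fun v _ => hf_nonneg v
  have hev : ∀ᶠ p : ℝ × ℝ in (atBot ×ˢ atTop : Filter (ℝ × ℝ)),
      p.1 ≤ e - 1 ∧ e + 1 ≤ p.2 :=
    (tendsto_fst.eventually (eventually_le_atBot (e - 1))).and
      (tendsto_snd.eventually (eventually_ge_atTop (e + 1)))
  have htail : Tendsto g (atBot ×ˢ atTop) (nhds 0) := by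
    have h1 : Tendsto (fun p : ℝ × ℝ => ∫ v in p.1..p.2, f v) (atBot ×ˢ atTop)
        (nhds (∫ v, f v)) :=
      intervalIntegral_tendsto_integral hf_int tendsto_fst tendsto_snd
    have h2 : Tendsto (fun p : ℝ × ℝ => (∫ v, f v) - ∫ v in p.1..p.2, f v)
        (atBot ×ˢ atTop) (nhds ((∫ v, f v) - ∫ v, f v)) := tendsto_const_nhds.sub h1
    rw [sub_self] at h2
    refine h2.congr' ?_
    filter_upwards [hev] with p hp
    rcases hp with ⟨ha, hb⟩
    have hab : p.1 ≤ p.2 := by linarith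
    have hadd := integral_add_compl (measurableSet_Icc (a := p.1) (b := p.2)) hf_int
    rw [intervalIntegral.integral_of_le hab, ← integral_Icc_eq_integral_Ioc]
    simp only [hg]
    linarith [hadd]
  set C : ℝ := 1 + ∑ k ∈ Finset.Icc 1 K, 2 / ((k : ℝ) * π) with hC
  have hCg : Tendsto (fun p => C * g p) (atBot ×ˢ atTop) (nhds 0) := by
    simpa using htail.const_mul C
  apply squeeze_zero_norm' ?_ hCg
  filter_upwards [hev] with p hp
  rcases hp with ⟨ha, hb⟩
  have hba : (0 : ℝ) < p.2 - p.1 := by linarith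
  have h1 : |(e - p.1) / (p.2 - p.1)| ≤ 1 := by
    rw [abs_div, abs_of_pos hba, div_le_one hba, abs_of_nonneg (by linarith : (0:ℝ) ≤ e - p.1)]
    linarith
  have hcos : ∀ k : ℕ,
      |∫ v in (Set.Icc p.1 p.2)ᶜ, Real.cos ((k : ℝ) * π * (v - p.1) / (p.2 - p.1)) * f v|
        ≤ g p := by
    intro k
    calc |∫ v in (Set.Icc p.1 p.2)ᶜ, Real.cos ((k : ℝ) * π * (v - p.1) / (p.2 - p.1)) * f v|
        ≤ ∫ v in (Set.Icc p.1 p.2)ᶜ,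
            |Real.cos ((k : ℝ) * π * (v - p.1) / (p.2 - p.1)) * f v| :=
          (Real.norm_eq_abs _ ▸ norm_integral_le_integral_norm _).trans (le_of_eq (by simp only [Real.norm_eq_abs]))
      _ ≤ g p := by
          refine integral_mono_of_nonneg (ae_of_all _ fun v => abs_nonneg _)
            (hf_int.restrict) (ae_of_all _ fun v => ?_)
          simp only []
          rw [abs_mul, abs_of_nonneg (hf_nonneg v)]
          exact mul_le_of_le_one_left (hf_nonneg v) (Real.abs_cos_le_one _)
  have hsum : ∀ k ∈ Finset.Icc 1 K,
      |2 / ((k : ℝ) * π) * Real.sin ((k : ℝ) * π * (e - p.1) / (p.2 - p.1)) *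
          ∫ v in (Set.Icc p.1 p.2)ᶜ,
            Real.cos ((k : ℝ) * π * (v - p.1) / (p.2 - p.1)) * f v|
        ≤ 2 / ((k : ℝ) * π) * g p := by
    intro k hk
    have hk1 : (1 : ℕ) ≤ k := (Finset.mem_Icc.mp hk).1
    have hkpos : (0 : ℝ) < (k : ℝ) * π := by
      have : (0:ℝ) < (k:ℝ) := by exact_mod_cast hk1
      positivity
    have hc : (0 : ℝ) ≤ 2 / ((k : ℝ) * π) := by positivity
    rw [abs_mul, abs_mul, abs_of_nonneg hc]
    calc 2 / ((k : ℝ) * π) * |Real.sin ((k : ℝ) * π * (e - p.1) / (p.2 - p.1))| *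
          |∫ v in (Set.Icc p.1 p.2)ᶜ,
            Real.cos ((k : ℝ) * π * (v - p.1) / (p.2 - p.1)) * f v|
        ≤ 2 / ((k : ℝ) * π) * 1 * g p := by
          gcongr
          · exact Real.abs_sin_le_one _
          · exact hcos k
      _ = 2 / ((k : ℝ) * π) * g p := by ring
  calc ‖(e - p.1) / (p.2 - p.1) * g p +
          ∑ k ∈ Finset.Icc 1 K,
            2 / ((k : ℝ) * π) * Real.sin ((k : ℝ) * π * (e - p.1) / (p.2 - p.1)) *
              ∫ v in (Set.Icc p.1 p.2)ᶜ,
                Real.cos ((k : ℝ) * π * (v - p.1) / (p.2 - p.1)) * f v‖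
      ≤ |(e - p.1) / (p.2 - p.1) * g p| +
          ∑ k ∈ Finset.Icc 1 K,
            |2 / ((k : ℝ) * π) * Real.sin ((k : ℝ) * π * (e - p.1) / (p.2 - p.1)) *
              ∫ v in (Set.Icc p.1 p.2)ᶜ,
                Real.cos ((k : ℝ) * π * (v - p.1) / (p.2 - p.1)) * f v| := by
        refine (abs_add_le _ _).trans ?_
        gcongr
        exact Finset.abs_sum_le_sum_abs _ _
    _ ≤ 1 * g p + ∑ k ∈ Finset.Icc 1 K, 2 / ((k : ℝ) * π) * g p := by
        gcongr with k hk
        · rw [one_mul, abs_mul, abs_of_nonneg (hg0 p)]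
          exact mul_le_of_le_one_left (hg0 p) h1
        · exact hsum k hk
    _ = C * g p := by rw [hC, ← Finset.sum_mul]; ring
end

section
/- Let f : ℝ → ℝ be a nonnegative, bounded, Lebesgue-integrable function with ∫_ℝ f = 1 and with finite first and second moments, i.e. ∫_ℝ |v| f(v) dv < ∞ and ∫_ℝ v² f(v) dv < ∞. Fix a natural number K, reals w_1, …, w_K with |w_k| ≤ 1 for all 1 ≤ k ≤ K, and a real e. For reals a < b with a ≤ e ≤ b, define ε₂(a,b) = ((e−a)/(b−a)) · ∫_{ℝ∖[a,b]} f(v) dv + ∑_{k=1}^K (2/(kπ)) · w_k · sin(kπ(e−a)/(b−a)) · ∫_{ℝ∖[a,b]} cos(kπ(v−a)/(b−a)) f(v) dv. Then ε₂(a,b) tends to 0 as a → −∞ and b → +∞ (i.e. along the filter atBot ×ˢ atTop on pairs (a,b)). -/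
open Real MeasureTheory Filter Topology

/-- Paper's Lemma A.1 (counterparty level): the truncation-range error `ε₂` in the
spectrally filtered COS-recovered CDF, with filter values `|w k| ≤ 1`, converges to 0
as the truncation range `[a,b]` grows to cover ℝ. -/
theorem cos_range_truncation_error_filtered_tendsto_zero
    (f : ℝ → ℝ) (hf_nonneg : ∀ v, 0 ≤ f v) (hf_bdd : ∃ M : ℝ, ∀ v, f v ≤ M)
    (hf_int : Integrable f)
    (hf_one : ∫ v, f v = 1)
    (hf_m1 : Integrable (fun v => |v| * f v))
    (hf_m2 : Integrable (fun v => v ^ 2 * f v))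
    (K : ℕ) (w : ℕ → ℝ) (hw : ∀ k : ℕ, 1 ≤ k → k ≤ K → |w k| ≤ 1) (e : ℝ) :
    Tendsto
      (fun p : ℝ × ℝ =>
        (e - p.1) / (p.2 - p.1) * (∫ v in (Set.Icc p.1 p.2)ᶜ, f v) +
          ∑ k ∈ Finset.Icc 1 K,
            2 / ((k : ℝ) * π) * w k * Real.sin ((k : ℝ) * π * (e - p.1) / (p.2 - p.1)) *
              ∫ v in (Set.Icc p.1 p.2)ᶜ,
                Real.cos ((k : ℝ) * π * (v - p.1) / (p.2 - p.1)) * f v)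
      (Filter.atBot ×ˢ Filter.atTop) (nhds 0) := by
  classical
  set tail : ℝ × ℝ → ℝ := fun p => ∫ v in (Set.Icc p.1 p.2)ᶜ, f v with htail_def
  have htail_nonneg : ∀ p : ℝ × ℝ, 0 ≤ tail p := fun p =>
    setIntegral_nonneg (measurableSet_Icc.compl) (fun v _ => hf_nonneg v)
  have htail0 : Tendsto tail (atBot ×ˢ atTop) (𝓝 0) := by
    have h1 : Tendsto (fun p : ℝ × ℝ => ∫ v in p.1..p.2, f v) (atBot ×ˢ atTop)
        (𝓝 (∫ v, f v)) :=
      MeasureTheory.intervalIntegral_tendsto_integral hf_int tendsto_fst tendsto_snd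
    have h2 : Tendsto (fun p : ℝ × ℝ => (∫ v, f v) - ∫ v in p.1..p.2, f v)
        (atBot ×ˢ atTop) (𝓝 ((∫ v, f v) - ∫ v, f v)) := tendsto_const_nhds.sub h1
    rw [sub_self] at h2
    refine h2.congr' ?_
    filter_upwards [Filter.prod_mem_prod (Filter.Iic_mem_atBot e) (Filter.Ici_mem_atTop e)]
      with p hp
    have hab : p.1 ≤ p.2 := le_trans hp.1 hp.2
    have hIcc : ∫ v in p.1..p.2, f v = ∫ v in Set.Icc p.1 p.2, f v := by
      rw [intervalIntegral.integral_of_le hab, MeasureTheory.integral_Icc_eq_integral_Ioc]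
    have hadd := MeasureTheory.integral_add_compl
      (measurableSet_Icc (a := p.1) (b := p.2)) hf_int
    simp only [htail_def]
    rw [hIcc]
    linarith
  set C : ℝ := 1 + ∑ k ∈ Finset.Icc 1 K, 2 / ((k : ℝ) * π) with hC
  have hCtail : Tendsto (fun p => C * tail p) (atBot ×ˢ atTop) (𝓝 0) := by
    simpa using htail0.const_mul C
  refine squeeze_zero_norm' ?_ hCtail
  filter_upwards [Filter.prod_mem_prod (Filter.Iic_mem_atBot (e - 1)) (Filter.Ici_mem_atTop e)]
    with p hp
  obtain ⟨ha, hb⟩ := hp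
  simp only [Set.mem_Iic] at ha
  simp only [Set.mem_Ici] at hb
  have hae : p.1 ≤ e := by linarith
  have hbe : e ≤ p.2 := hb
  have hba : (0:ℝ) < p.2 - p.1 := by linarith
  -- bound for each cosine integral
  have hIboundk : ∀ k : ℕ,
      ‖∫ v in (Set.Icc p.1 p.2)ᶜ,
          Real.cos ((k:ℝ) * π * (v - p.1) / (p.2 - p.1)) * f v‖ ≤ tail p := by
    intro k
    refine norm_integral_le_of_norm_le (hf_int.restrict) ?_
    filter_upwards with v
    rw [Real.norm_eq_abs, abs_mul]
    calc |Real.cos ((k:ℝ) * π * (v - p.1) / (p.2 - p.1))| * |f v|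
        ≤ 1 * |f v| := mul_le_mul_of_nonneg_right (Real.abs_cos_le_one _) (abs_nonneg _)
      _ = f v := by rw [one_mul, abs_of_nonneg (hf_nonneg v)]
  -- bound for the first term
  have hratio : |(e - p.1) / (p.2 - p.1)| ≤ 1 := by
    rw [abs_div, abs_of_nonneg (by linarith : (0:ℝ) ≤ e - p.1),
      abs_of_pos hba, div_le_one hba]
    linarith
  have hterm1 : ‖(e - p.1) / (p.2 - p.1) * tail p‖ ≤ 1 * tail p := by
    rw [Real.norm_eq_abs, abs_mul, abs_of_nonneg (htail_nonneg p)]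
    exact mul_le_mul_of_nonneg_right hratio (htail_nonneg p)
  -- bound for each summand
  have hsummand : ∀ k ∈ Finset.Icc 1 K,
      ‖2 / ((k : ℝ) * π) * w k * Real.sin ((k : ℝ) * π * (e - p.1) / (p.2 - p.1)) *
        ∫ v in (Set.Icc p.1 p.2)ᶜ,
          Real.cos ((k : ℝ) * π * (v - p.1) / (p.2 - p.1)) * f v‖
      ≤ 2 / ((k : ℝ) * π) * tail p := by
    intro k hk
    obtain ⟨hk1, hk2⟩ := Finset.mem_Icc.mp hk
    have hkpos : (0:ℝ) < (k : ℝ) * π := by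
      have : (0:ℝ) < (k:ℝ) := by exact_mod_cast hk1
      positivity
    have hc : (0:ℝ) ≤ 2 / ((k : ℝ) * π) := by positivity
    rw [Real.norm_eq_abs, abs_mul, abs_mul, abs_mul, abs_of_nonneg hc]
    calc 2 / ((k : ℝ) * π) * |w k| * |Real.sin ((k : ℝ) * π * (e - p.1) / (p.2 - p.1))| *
          |∫ v in (Set.Icc p.1 p.2)ᶜ,
            Real.cos ((k : ℝ) * π * (v - p.1) / (p.2 - p.1)) * f v|
        ≤ 2 / ((k : ℝ) * π) * 1 * 1 * tail p := by
          refine mul_le_mul ?_ ?_ (abs_nonneg _) (by positivity)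
          · refine mul_le_mul ?_ (Real.abs_sin_le_one _) (abs_nonneg _) (by positivity)
            exact mul_le_mul_of_nonneg_left (hw k hk1 hk2) hc
          · simpa using hIboundk k
      _ = 2 / ((k : ℝ) * π) * tail p := by ring
  have hsum : ‖∑ k ∈ Finset.Icc 1 K,
      2 / ((k : ℝ) * π) * w k * Real.sin ((k : ℝ) * π * (e - p.1) / (p.2 - p.1)) *
        ∫ v in (Set.Icc p.1 p.2)ᶜ,
          Real.cos ((k : ℝ) * π * (v - p.1) / (p.2 - p.1)) * f v‖
      ≤ (∑ k ∈ Finset.Icc 1 K, 2 / ((k : ℝ) * π)) * tail p := by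
    calc _ ≤ ∑ k ∈ Finset.Icc 1 K, ‖2 / ((k : ℝ) * π) * w k *
          Real.sin ((k : ℝ) * π * (e - p.1) / (p.2 - p.1)) *
          ∫ v in (Set.Icc p.1 p.2)ᶜ,
            Real.cos ((k : ℝ) * π * (v - p.1) / (p.2 - p.1)) * f v‖ :=
        norm_sum_le _ _
      _ ≤ ∑ k ∈ Finset.Icc 1 K, 2 / ((k : ℝ) * π) * tail p :=
        Finset.sum_le_sum hsummand
      _ = (∑ k ∈ Finset.Icc 1 K, 2 / ((k : ℝ) * π)) * tail p := by
        rw [Finset.sum_mul]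
  calc ‖(e - p.1) / (p.2 - p.1) * (∫ v in (Set.Icc p.1 p.2)ᶜ, f v) +
        ∑ k ∈ Finset.Icc 1 K,
          2 / ((k : ℝ) * π) * w k * Real.sin ((k : ℝ) * π * (e - p.1) / (p.2 - p.1)) *
            ∫ v in (Set.Icc p.1 p.2)ᶜ,
              Real.cos ((k : ℝ) * π * (v - p.1) / (p.2 - p.1)) * f v‖
      ≤ ‖(e - p.1) / (p.2 - p.1) * tail p‖ +
        ‖∑ k ∈ Finset.Icc 1 K,
          2 / ((k : ℝ) * π) * w k * Real.sin ((k : ℝ) * π * (e - p.1) / (p.2 - p.1)) *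
            ∫ v in (Set.Icc p.1 p.2)ᶜ,
              Real.cos ((k : ℝ) * π * (v - p.1) / (p.2 - p.1)) * f v‖ := norm_add_le _ _
    _ ≤ 1 * tail p + (∑ k ∈ Finset.Icc 1 K, 2 / ((k : ℝ) * π)) * tail p :=
        add_le_add hterm1 hsum
    _ = C * tail p := by rw [hC]; ring
end

section
/- Let a < b be reals, let C_0 and (C_k)_{k≥1} be real numbers with ∑_{k=1}^∞ |C_k| < ∞, and let g : ℝ → ℝ satisfy g(v) = C_0/2 + ∑_{k=1}^∞ C_k · cos(kπ(v−a)/(b−a)) for all v ∈ [a,b]. Then ∫_a^b max(v,0) · g(v) dv = (C_0/4)·(max(b,0)² − max(a,0)²) + ∑_{k=1}^∞ C_k · ((b−a)/(kπ)) · [ max(b,0)·sin(kπ(max(b,0)−a)/(b−a)) − max(a,0)·sin(kπ(max(a,0)−a)/(b−a)) + ((b−a)/(kπ))·( cos(kπ(max(b,0)−a)/(b−a)) − cos(kπ(max(a,0)−a)/(b−a)) ) ], where the series on the right converges absolutely. -/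
open Real MeasureTheory intervalIntegral

lemma EE_maxcut (φ : ℝ → ℝ) (hφ : Continuous φ) {a b : ℝ} (hab : a ≤ b) :
    ∫ v in a..b, max v 0 * φ v = ∫ v in (max a 0)..(max b 0), v * φ v := by
  have hcont : Continuous fun v => max v 0 * φ v :=
    (continuous_id.max continuous_const).mul hφ
  have hint : ∀ x y : ℝ, IntervalIntegrable (fun v => max v 0 * φ v) volume x y :=
    fun x y => hcont.intervalIntegrable x y
  have h1 : ∫ v in a..(max a 0), max v 0 * φ v = 0 := by
    rcases le_or_gt 0 a with h | h
    · rw [max_eq_left h, intervalIntegral.integral_same]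
    · rw [max_eq_right h.le]
      have he : Set.EqOn (fun v => max v 0 * φ v) (fun _ => (0:ℝ)) (Set.uIcc a 0) := by
        intro v hv
        rw [Set.uIcc_of_le h.le] at hv
        simp [max_eq_right hv.2]
      rw [intervalIntegral.integral_congr he, intervalIntegral.integral_zero]
  have h3 : ∫ v in (max b 0)..b, max v 0 * φ v = 0 := by
    rcases le_or_gt 0 b with h | h
    · rw [max_eq_left h, intervalIntegral.integral_same]
    · rw [max_eq_right h.le]
      have he : Set.EqOn (fun v => max v 0 * φ v) (fun _ => (0:ℝ)) (Set.uIcc 0 b) := by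
        intro v hv
        rw [Set.uIcc_of_ge h.le] at hv
        simp [max_eq_right hv.2]
      rw [intervalIntegral.integral_congr he, intervalIntegral.integral_zero]
  have h2 : ∫ v in (max a 0)..(max b 0), max v 0 * φ v
      = ∫ v in (max a 0)..(max b 0), v * φ v := by
    apply intervalIntegral.integral_congr
    intro v hv
    rw [Set.uIcc_of_le (max_le_max hab le_rfl)] at hv
    have : (0:ℝ) ≤ v := le_trans (le_max_right a 0) hv.1
    simp [max_eq_left this]
  rw [← intervalIntegral.integral_add_adjacent_intervals (hint a (max a 0)) (hint (max a 0) b),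
    ← intervalIntegral.integral_add_adjacent_intervals (hint (max a 0) (max b 0)) (hint (max b 0) b),
    h1, h3, h2, zero_add, add_zero]

lemma EE_antideriv {c : ℝ} (hc : c ≠ 0) (a v : ℝ) :
    HasDerivAt (fun v => v * Real.sin (c * (v - a)) / c + Real.cos (c * (v - a)) / c ^ 2)
      (v * Real.cos (c * (v - a))) v := by
  have hlin : HasDerivAt (fun v : ℝ => c * (v - a)) c v := by
    simpa using ((hasDerivAt_id v).sub_const a).const_mul c
  have hsin : HasDerivAt (fun v => Real.sin (c * (v - a))) (Real.cos (c * (v - a)) * c) v :=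
    hlin.sin
  have hcos : HasDerivAt (fun v => Real.cos (c * (v - a))) (-Real.sin (c * (v - a)) * c) v :=
    hlin.cos
  have h1 : HasDerivAt (fun v => v * Real.sin (c * (v - a)) / c)
      ((1 * Real.sin (c * (v - a)) + v * (Real.cos (c * (v - a)) * c)) / c) v :=
    ((hasDerivAt_id v).mul hsin).div_const c
  have h2 : HasDerivAt (fun v => Real.cos (c * (v - a)) / c ^ 2)
      ((-Real.sin (c * (v - a)) * c) / c ^ 2) v := hcos.div_const _
  refine (h1.add h2).congr_deriv ?_
  field_simp
  ring

lemma EE_cos_int {c : ℝ} (hc : c ≠ 0) {a b : ℝ} (hab : a ≤ b) :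
    ∫ v in a..b, max v 0 * Real.cos (c * (v - a)) =
      (1/c) * (max b 0 * Real.sin (c * (max b 0 - a)) - max a 0 * Real.sin (c * (max a 0 - a))
        + (1/c) * (Real.cos (c * (max b 0 - a)) - Real.cos (c * (max a 0 - a)))) := by
  rw [EE_maxcut _ (by continuity) hab]
  rw [intervalIntegral.integral_eq_sub_of_hasDerivAt
    (f := fun v => v * Real.sin (c * (v - a)) / c + Real.cos (c * (v - a)) / c ^ 2)
    (fun v _ => EE_antideriv hc a v)
    ((by continuity : Continuous fun v => v * Real.cos (c * (v - a))).intervalIntegrable _ _)]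
  field_simp
  ring

lemma EE_abs_bound {D D' m1 m2 s1 s2 c1 c2 : ℝ} (hD0 : 0 ≤ D) (hDle : D ≤ D')
    (hs1 : |s1| ≤ 1) (hs2 : |s2| ≤ 1) (hc1 : |c1| ≤ 1) (hc2 : |c2| ≤ 1) :
    |D * (m1 * s1 - m2 * s2 + D * (c1 - c2))| ≤ D' * (|m1| + |m2| + D' * 2) := by
  have hD' : 0 ≤ D' := hD0.trans hDle
  have h1 : |m1 * s1| ≤ |m1| := by
    rw [abs_mul]; exact mul_le_of_le_one_right (abs_nonneg _) hs1
  have h2 : |m2 * s2| ≤ |m2| := by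
    rw [abs_mul]; exact mul_le_of_le_one_right (abs_nonneg _) hs2
  have h3 : |c1 - c2| ≤ 2 := by
    calc |c1 - c2| ≤ |c1| + |c2| := abs_sub _ _
      _ ≤ 2 := by linarith
  have h4 : |D * (c1 - c2)| ≤ D' * 2 := by
    rw [abs_mul, abs_of_nonneg hD0]
    exact mul_le_mul hDle h3 (abs_nonneg _) hD'
  have h5 : |m1 * s1 - m2 * s2 + D * (c1 - c2)| ≤ |m1| + |m2| + D' * 2 := by
    calc |m1 * s1 - m2 * s2 + D * (c1 - c2)|
        ≤ |m1 * s1 - m2 * s2| + |D * (c1 - c2)| := abs_add_le _ _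
      _ ≤ (|m1 * s1| + |m2 * s2|) + D' * 2 := add_le_add (abs_sub _ _) h4
      _ ≤ |m1| + |m2| + D' * 2 := by linarith
  rw [abs_mul, abs_of_nonneg hD0]
  exact mul_le_mul hDle h5 (abs_nonneg _) (by positivity)

set_option maxHeartbeats 1000000 in
/-- The paper's semi-analytical Expected Exposure formula: plugging the Fourier-cosine
series expansion of the density into `∫ max(v,0) g(v) dv` and exchanging summation and
integration. -/
theorem expected_exposure_cos_formula
    (a b : ℝ) (hab : a < b) (C : ℕ → ℝ)
    (hC : Summable fun k : ℕ => |C (k + 1)|)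
    (g : ℝ → ℝ)
    (hg : ∀ v ∈ Set.Icc a b,
      g v = C 0 / 2 +
        ∑' k : ℕ, C (k + 1) * Real.cos (((k : ℝ) + 1) * π * (v - a) / (b - a))) :
    (Summable fun k : ℕ =>
      |C (k + 1) * ((b - a) / (((k : ℝ) + 1) * π)) *
        (max b 0 * Real.sin (((k : ℝ) + 1) * π * (max b 0 - a) / (b - a)) -
          max a 0 * Real.sin (((k : ℝ) + 1) * π * (max a 0 - a) / (b - a)) +
          (b - a) / (((k : ℝ) + 1) * π) *
            (Real.cos (((k : ℝ) + 1) * π * (max b 0 - a) / (b - a)) -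
              Real.cos (((k : ℝ) + 1) * π * (max a 0 - a) / (b - a))))|) ∧
    ∫ v in a..b, max v 0 * g v =
      C 0 / 4 * (max b 0 ^ 2 - max a 0 ^ 2) +
        ∑' k : ℕ, C (k + 1) * ((b - a) / (((k : ℝ) + 1) * π)) *
          (max b 0 * Real.sin (((k : ℝ) + 1) * π * (max b 0 - a) / (b - a)) -
            max a 0 * Real.sin (((k : ℝ) + 1) * π * (max a 0 - a) / (b - a)) +
            (b - a) / (((k : ℝ) + 1) * π) *
              (Real.cos (((k : ℝ) + 1) * π * (max b 0 - a) / (b - a)) -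
                Real.cos (((k : ℝ) + 1) * π * (max a 0 - a) / (b - a)))) := by
  have hba : (0:ℝ) < b - a := sub_pos.2 hab
  have hπ : (0:ℝ) < π := Real.pi_pos
  -- summability of the series of terms
  have hDk : ∀ k : ℕ, (0:ℝ) < ((k:ℝ)+1) * π := by
    intro k; positivity
  have hbound : ∀ k : ℕ,
      |C (k + 1) * ((b - a) / (((k : ℝ) + 1) * π)) *
        (max b 0 * Real.sin (((k : ℝ) + 1) * π * (max b 0 - a) / (b - a)) -
          max a 0 * Real.sin (((k : ℝ) + 1) * π * (max a 0 - a) / (b - a)) +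
          (b - a) / (((k : ℝ) + 1) * π) *
            (Real.cos (((k : ℝ) + 1) * π * (max b 0 - a) / (b - a)) -
              Real.cos (((k : ℝ) + 1) * π * (max a 0 - a) / (b - a))))|
      ≤ |C (k + 1)| * ((b - a)/π * (|max b 0| + |max a 0| + (b - a)/π * 2)) := by
    intro k
    have hD0 : (0:ℝ) ≤ (b - a) / (((k : ℝ) + 1) * π) := by positivity
    have hDle : (b - a) / (((k : ℝ) + 1) * π) ≤ (b - a)/π := by
      apply div_le_div_of_nonneg_left hba.le hπ
      nlinarith [Nat.cast_nonneg (α := ℝ) k, hπ]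
    rw [mul_assoc, abs_mul]
    exact mul_le_mul_of_nonneg_left
      (EE_abs_bound hD0 hDle (Real.abs_sin_le_one _) (Real.abs_sin_le_one _)
        (Real.abs_cos_le_one _) (Real.abs_cos_le_one _)) (abs_nonneg _)
  have hS : Summable (fun k : ℕ =>
      |C (k + 1) * ((b - a) / (((k : ℝ) + 1) * π)) *
        (max b 0 * Real.sin (((k : ℝ) + 1) * π * (max b 0 - a) / (b - a)) -
          max a 0 * Real.sin (((k : ℝ) + 1) * π * (max a 0 - a) / (b - a)) +
          (b - a) / (((k : ℝ) + 1) * π) *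
            (Real.cos (((k : ℝ) + 1) * π * (max b 0 - a) / (b - a)) -
              Real.cos (((k : ℝ) + 1) * π * (max a 0 - a) / (b - a))))|) :=
    Summable.of_nonneg_of_le (fun k => abs_nonneg _) hbound
      (hC.mul_right _)
  refine ⟨hS, ?_⟩
  -- per-k integral computation
  have hkey : ∀ k : ℕ,
      (∫ v in a..b, max v 0 * (C (k+1) * Real.cos (((k:ℝ)+1) * π * (v - a) / (b - a))))
      = C (k + 1) * ((b - a) / (((k : ℝ) + 1) * π)) *
        (max b 0 * Real.sin (((k : ℝ) + 1) * π * (max b 0 - a) / (b - a)) -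
          max a 0 * Real.sin (((k : ℝ) + 1) * π * (max a 0 - a) / (b - a)) +
          (b - a) / (((k : ℝ) + 1) * π) *
            (Real.cos (((k : ℝ) + 1) * π * (max b 0 - a) / (b - a)) -
              Real.cos (((k : ℝ) + 1) * π * (max a 0 - a) / (b - a)))) := by
    intro k
    have hc0 : (((k:ℝ)+1) * π / (b - a)) ≠ 0 := by positivity
    have harg : ∀ v : ℝ, ((k:ℝ)+1) * π * (v - a) / (b - a) = (((k:ℝ)+1) * π / (b - a)) * (v - a) :=
      fun v => by ring
    have h1c : (1:ℝ) / (((k:ℝ)+1) * π / (b - a)) = (b - a) / (((k:ℝ)+1) * π) := one_div_div _ _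
    simp only [harg]
    have hpull : (∫ v in a..b, max v 0 * (C (k+1) * Real.cos ((((k:ℝ)+1) * π / (b - a)) * (v - a))))
        = C (k+1) * ∫ v in a..b, max v 0 * Real.cos ((((k:ℝ)+1) * π / (b - a)) * (v - a)) := by
      rw [← intervalIntegral.integral_const_mul]
      congr 1; ext v; ring
    rw [hpull, EE_cos_int hc0 hab.le, h1c]
    ring
  -- continuity facts
  have hcos_cont : ∀ k : ℕ, Continuous fun v : ℝ =>
      C (k + 1) * Real.cos (((k : ℝ) + 1) * π * (v - a) / (b - a)) := by
    intro k
    exact continuous_const.mul (Real.continuous_cos.comp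
      ((continuous_const.mul (continuous_id.sub continuous_const)).div_const (b - a)))
  have hScont : Continuous fun v : ℝ =>
      ∑' k : ℕ, C (k + 1) * Real.cos (((k : ℝ) + 1) * π * (v - a) / (b - a)) := by
    apply continuous_tsum hcos_cont hC
    intro k v
    rw [Real.norm_eq_abs, abs_mul]
    exact mul_le_of_le_one_right (abs_nonneg _) (Real.abs_cos_le_one _)
  -- replace g by its series
  have hgI : ∫ v in a..b, max v 0 * g v
      = ∫ v in a..b, max v 0 * (C 0 / 2 +
          ∑' k : ℕ, C (k + 1) * Real.cos (((k : ℝ) + 1) * π * (v - a) / (b - a))) := by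
    apply intervalIntegral.integral_congr
    intro v hv
    rw [Set.uIcc_of_le hab.le] at hv
    simp only [hg v hv]
  rw [hgI]
  -- split the integral
  have hint1 : IntervalIntegrable (fun v : ℝ => max v 0 * (C 0 / 2)) volume a b :=
    (((continuous_id.max continuous_const)).mul continuous_const).intervalIntegrable _ _
  have hint2 : IntervalIntegrable (fun v : ℝ => max v 0 *
      ∑' k : ℕ, C (k + 1) * Real.cos (((k : ℝ) + 1) * π * (v - a) / (b - a))) volume a b :=
    ((continuous_id.max continuous_const).mul hScont).intervalIntegrable _ _
  have hsplit : (∫ v in a..b, max v 0 * (C 0 / 2 +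
          ∑' k : ℕ, C (k + 1) * Real.cos (((k : ℝ) + 1) * π * (v - a) / (b - a))))
      = (∫ v in a..b, max v 0 * (C 0 / 2)) +
        ∫ v in a..b, max v 0 *
          ∑' k : ℕ, C (k + 1) * Real.cos (((k : ℝ) + 1) * π * (v - a) / (b - a)) := by
    rw [← intervalIntegral.integral_add hint1 hint2]
    congr 1; ext v; ring
  rw [hsplit]
  -- first piece
  have hmax : ∫ v in a..b, max v 0 = ((max b 0)^2 - (max a 0)^2)/2 := by
    have h := EE_maxcut (fun _ => (1:ℝ)) continuous_const hab.le
    simpa [integral_id] using h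
  have hfirst : (∫ v in a..b, max v 0 * (C 0 / 2)) = C 0 / 4 * (max b 0 ^ 2 - max a 0 ^ 2) := by
    rw [intervalIntegral.integral_mul_const, hmax]
    ring
  rw [hfirst]
  -- second piece: swap sum and integral
  have hF_int : ∀ k : ℕ, Integrable (fun v : ℝ => max v 0 *
      (C (k + 1) * Real.cos (((k : ℝ) + 1) * π * (v - a) / (b - a))))
      (volume.restrict (Set.Ioc a b)) := by
    intro k
    exact ((continuous_id.max continuous_const).mul (hcos_cont k)).integrableOn_Ioc
  have hF_sum : Summable fun k : ℕ => ∫ v, ‖max v 0 *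
      (C (k + 1) * Real.cos (((k : ℝ) + 1) * π * (v - a) / (b - a)))‖
      ∂(volume.restrict (Set.Ioc a b)) := by
    apply Summable.of_nonneg_of_le (fun k => integral_nonneg fun v => norm_nonneg _) ?_
      (hC.mul_left ((|a| + |b|) * (b - a)))
    intro k
    have hnb : ∀ v ∈ Set.Ioc a b, ‖‖max v 0 *
        (C (k + 1) * Real.cos (((k : ℝ) + 1) * π * (v - a) / (b - a)))‖‖
        ≤ (|a| + |b|) * |C (k + 1)| := by
      intro v hv
      rw [norm_norm, Real.norm_eq_abs, abs_mul]
      apply mul_le_mul ?_ ?_ (abs_nonneg _) (by positivity)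
      · rw [abs_of_nonneg (le_max_right v 0)]
        calc max v 0 ≤ max b 0 := max_le_max hv.2 le_rfl
        _ ≤ |b| := max_le (le_abs_self b) (abs_nonneg b)
        _ ≤ |a| + |b| := le_add_of_nonneg_left (abs_nonneg a)
      · rw [abs_mul]
        exact mul_le_of_le_one_right (abs_nonneg _) (Real.abs_cos_le_one _)
    have hmeas : AEStronglyMeasurable (fun v : ℝ => ‖max v 0 *
        (C (k + 1) * Real.cos (((k : ℝ) + 1) * π * (v - a) / (b - a)))‖)
        (volume.restrict (Set.Ioc a b)) :=
      (((continuous_id.max continuous_const).mul (hcos_cont k)).norm).aestronglyMeasurable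
    calc (∫ v, ‖max v 0 * (C (k + 1) * Real.cos (((k : ℝ) + 1) * π * (v - a) / (b - a)))‖
          ∂(volume.restrict (Set.Ioc a b)))
        = ‖∫ v, ‖max v 0 * (C (k + 1) * Real.cos (((k : ℝ) + 1) * π * (v - a) / (b - a)))‖
          ∂(volume.restrict (Set.Ioc a b))‖ :=
          (Real.norm_of_nonneg (integral_nonneg fun v => norm_nonneg _)).symm
      _ ≤ ((|a| + |b|) * |C (k + 1)|) * (volume (Set.Ioc a b)).toReal :=
          norm_setIntegral_le_of_norm_le_const (by rw [Real.volume_Ioc]; exact ENNReal.ofReal_lt_top)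
            hnb
      _ = (|a| + |b|) * (b - a) * |C (k + 1)| := by
          rw [Real.volume_Ioc, ENNReal.toReal_ofReal hba.le]; ring
  have hswap : (∫ v in a..b, max v 0 *
        ∑' k : ℕ, C (k + 1) * Real.cos (((k : ℝ) + 1) * π * (v - a) / (b - a)))
      = ∑' k : ℕ, ∫ v in a..b, max v 0 *
          (C (k + 1) * Real.cos (((k : ℝ) + 1) * π * (v - a) / (b - a))) := by
    rw [intervalIntegral.integral_of_le hab.le]
    have hs := MeasureTheory.integral_tsum_of_summable_integral_norm hF_int hF_sum
    simp only [← tsum_mul_left]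
    rw [← hs]
    exact tsum_congr fun k => (intervalIntegral.integral_of_le hab.le).symm
  rw [hswap]
  congr 1
  exact tsum_congr hkey
end
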